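/- Let p be a prime, S a finite p-group, and X a finite bifree (S,S)-biset. Let P < Q ≤ S with P of index p in Q, and let φ: P → S be an injective homomorphism that extends to a group homomorphism Q → S. Then |X^{(P,φ)}|/|C_S(φ(P))| ≡ Σ_{[ψ]} |X^{(Q,ψ)}|/|C_S(ψ(Q))| modulo p, where [ψ] ranges over a set of representatives of the S-conjugacy classes of injective homomorphisms ψ: Q → S whose restriction to P is S-conjugate to φ (here both |X^{(P,φ)}| and each |X^{(Q,ψ)}| are divisible by |C_S(φ(P))| and |C_S(ψ(Q))| respectively, so all terms are integers; ψ ∼ c_s∘ψ for s ∈ S). -/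

import Mathlib

/-! ## Bisets -/

/-- A `(G,H)`-biset structure on a type `X`: a left `H`-action and a right `G`-action
that commute with each other. -/
structure BisetAction (G H : Type*) [Group G] [Group H] (X : Type*) where
  /-- the left `H`-action -/
  smul : H → X → X
  /-- the right `G`-action -/
  rmul : X → G → X
  one_smul : ∀ x, smul 1 x = x
  mul_smul : ∀ h₁ h₂ x, smul (h₁ * h₂) x = smul h₁ (smul h₂ x)
  rmul_one : ∀ x, rmul x 1 = x
  rmul_mul : ∀ x g₁ g₂, rmul x (g₁ * g₂) = rmul (rmul x g₁) g₂
  smul_rmul : ∀ h x g, rmul (smul h x) g = smul h (rmul x g)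

namespace BisetAction

variable {G H K : Type*} [Group G] [Group H] [Group K] {X Y Z : Type*}

lemma smul_smul (A : BisetAction G H X) (h₁ h₂ : H) (x : X) :
    A.smul h₁ (A.smul h₂ x) = A.smul (h₁ * h₂) x := (A.mul_smul h₁ h₂ x).symm

lemma rmul_rmul (A : BisetAction G H X) (x : X) (g₁ g₂ : G) :
    A.rmul (A.rmul x g₁) g₂ = A.rmul x (g₁ * g₂) := (A.rmul_mul x g₁ g₂).symm

/-- The biset is left-free. -/
def LeftFree (A : BisetAction G H X) : Prop := ∀ (h : H) (x : X), A.smul h x = x → h = 1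

/-- The biset is right-free. -/
def RightFree (A : BisetAction G H X) : Prop := ∀ (g : G) (x : X), A.rmul x g = x → g = 1

/-- The biset is bifree: both actions are free. -/
def Bifree (A : BisetAction G H X) : Prop := A.LeftFree ∧ A.RightFree

/-- The fixed-point set `X^{(P,φ)} = {x | x·u = φ(u)·x for all u ∈ P}`. -/
def Fix (A : BisetAction G H X) (P : Subgroup G) (φ : P →* H) : Set X :=
  {x | ∀ u : P, A.rmul x u = A.smul (φ u) x}

/-- The opposite biset: same underlying set, with the two actions reversed
(`g·x·h` in `op A` is `h⁻¹·x·g⁻¹` in `A`). -/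
def op (A : BisetAction G H X) : BisetAction H G X where
  smul g x := A.rmul x g⁻¹
  rmul x h := A.smul h⁻¹ x
  one_smul x := by simpa using A.rmul_one x
  mul_smul g₁ g₂ x := by rw [mul_inv_rev, A.rmul_mul]
  rmul_one x := by simpa using A.one_smul x
  rmul_mul x h₁ h₂ := by rw [mul_inv_rev, A.mul_smul]
  smul_rmul g x h := (A.smul_rmul h⁻¹ x g⁻¹).symm

/-- The setoid of left `H`-orbits. -/
def leftOrbitSetoid (A : BisetAction G H X) : Setoid X where
  r x y := ∃ h : H, y = A.smul h x
  iseqv := by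
    refine ⟨fun x => ⟨1, (A.one_smul x).symm⟩, ?_, ?_⟩
    · rintro x y ⟨h, rfl⟩
      exact ⟨h⁻¹, by rw [A.smul_smul, inv_mul_cancel, A.one_smul]⟩
    · rintro x y z ⟨h₁, rfl⟩ ⟨h₂, rfl⟩
      exact ⟨h₂ * h₁, A.smul_smul h₂ h₁ x⟩

/-- The set of left `H`-orbits of the biset. -/
def leftOrbits (A : BisetAction G H X) : Type _ := Quotient (A.leftOrbitSetoid)

/-- Restricting the right action along a homomorphism `φ : P →* G`. -/
def restrictRight (A : BisetAction G H X) {P : Type*} [Group P] (φ : P →* G) :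
    BisetAction P H X where
  smul := A.smul
  rmul x u := A.rmul x (φ u)
  one_smul := A.one_smul
  mul_smul := A.mul_smul
  rmul_one x := by rw [map_one, A.rmul_one]
  rmul_mul x u₁ u₂ := by rw [map_mul, A.rmul_mul]
  smul_rmul h x u := A.smul_rmul h x (φ u)

/-- Restricting the left action along a homomorphism `φ : P →* H`. -/
def restrictLeft (A : BisetAction G H X) {P : Type*} [Group P] (φ : P →* H) :
    BisetAction G P X where
  smul u x := A.smul (φ u) x
  rmul := A.rmul
  one_smul x := by rw [map_one, A.one_smul]
  mul_smul u₁ u₂ x := by rw [map_mul, A.mul_smul]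
  rmul_one := A.rmul_one
  rmul_mul := A.rmul_mul
  smul_rmul u x g := A.smul_rmul (φ u) x g

end BisetAction

/-- An isomorphism of `(G,H)`-bisets: an equivalence of underlying sets commuting with
both actions. -/
structure BisetIso {G H : Type*} [Group G] [Group H] {X Y : Type*}
    (A : BisetAction G H X) (B : BisetAction G H Y) extends X ≃ Y where
  map_smul : ∀ (h : H) (x : X), toEquiv (A.smul h x) = B.smul h (toEquiv x)
  map_rmul : ∀ (x : X) (g : G), toEquiv (A.rmul x g) = B.rmul (toEquiv x) g

/-- Two homomorphisms `φ ψ : Q →* S` are `S`-conjugate if `ψ = c_s ∘ φ` for some `s ∈ S`. -/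
def HomSConj {S : Type*} [Group S] {Q : Subgroup S} (φ ψ : Q →* S) : Prop :=
  ∃ s : S, ∀ u : Q, ψ u = s * φ u * s⁻¹

/-- The restriction of `ψ : Q →* S` to `P ≤ Q` is `S`-conjugate to `φ : P →* S`. -/
def RestrictionSConj {S : Type*} [Group S] {P Q : Subgroup S} (hPQ : P ≤ Q)
    (ψ : Q →* S) (φ : P →* S) : Prop :=
  ∃ s : S, ∀ (u : S) (hu : u ∈ P), ψ ⟨u, hPQ hu⟩ = s * φ ⟨u, hu⟩ * s⁻¹


section GenericCounting

variable {C Y : Type*} [Group C]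

/-- The orbit setoid of a raw group action. -/
def actSetoid (act : C → Y → Y) (h1 : ∀ y, act 1 y = y)
    (hm : ∀ a b y, act (a * b) y = act a (act b y)) : Setoid Y where
  r x y := ∃ c : C, y = act c x
  iseqv := by
    refine ⟨fun x => ⟨1, (h1 x).symm⟩, ?_, ?_⟩
    · rintro x y ⟨c, rfl⟩
      exact ⟨c⁻¹, by rw [← hm, inv_mul_cancel, h1]⟩
    · rintro x y z ⟨a, rfl⟩ ⟨b, rfl⟩
      exact ⟨b * a, (hm b a x).symm⟩

lemma card_eq_card_mul_card_quot [Finite C] [Finite Y] (act : C → Y → Y)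
    (h1 : ∀ y, act 1 y = y) (hm : ∀ a b y, act (a * b) y = act a (act b y))
    (hfree : ∀ c y, act c y = y → c = 1) :
    Nat.card Y = Nat.card C * Nat.card (Quotient (actSetoid act h1 hm)) := by
  letI s : Setoid Y := actSetoid act h1 hm
  have hcan : ∀ (a b : C) (y : Y), act a y = act b y → a = b := by
    intro a b y h
    have h2 : act (b⁻¹ * a) y = y := by rw [hm, h, ← hm, inv_mul_cancel, h1]
    exact (inv_mul_eq_one.mp (hfree _ _ h2)).symm
  let e : Quotient s × C → Y := fun tc => act tc.2 tc.1.out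
  have hbij : Function.Bijective e := by
    constructor
    · rintro ⟨t, c⟩ ⟨t', c'⟩ h
      simp only [e] at h
      have ht : t = t' := by
        have hr : s.r t.out t'.out := by
          refine ⟨c'⁻¹ * c, ?_⟩
          rw [hm, h, ← hm, inv_mul_cancel, h1]
        have := Quotient.sound (s := s) hr
        rwa [Quotient.out_eq, Quotient.out_eq] at this
      subst ht
      have hc : c = c' := hcan _ _ _ h
      rw [hc]
    · intro y
      obtain ⟨c, hc⟩ := Quotient.mk_out (s := s) y
      exact ⟨(⟦y⟧, c), hc.symm⟩
  calc Nat.card Y = Nat.card (Quotient s × C) := (Nat.card_congr (Equiv.ofBijective e hbij)).symm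
    _ = Nat.card C * Nat.card (Quotient s) := by rw [Nat.card_prod, mul_comm]

lemma card_modEq_card_fixed_of_pow_eq_one {T : Type*} [Finite T] {p : ℕ} (hp : p.Prime)
    (f : Equiv.Perm T) (hf : f ^ p = 1) :
    Nat.card T ≡ Nat.card {t : T // f t = t} [MOD p] := by
  haveI : Fact p.Prime := ⟨hp⟩
  have hpg : IsPGroup p (Subgroup.zpowers f) := by
    intro g
    refine ⟨1, ?_⟩
    obtain ⟨k, hk⟩ := Subgroup.mem_zpowers_iff.mp g.2
    rw [pow_one]
    apply Subtype.ext
    rw [SubgroupClass.coe_pow, ← hk, ← zpow_natCast, ← zpow_mul, mul_comm, zpow_mul,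
      zpow_natCast, hf, one_zpow]
    rfl
  have hmod := hpg.card_modEq_card_fixedPoints T
  have hcongr : Nat.card (MulAction.fixedPoints (Subgroup.zpowers f) T)
      = Nat.card {t : T // f t = t} := by
    apply Nat.card_congr
    apply Equiv.subtypeEquivRight
    intro t
    rw [MulAction.mem_fixedPoints]
    constructor
    · intro h
      exact h ⟨f, Subgroup.mem_zpowers f⟩
    · intro h g
      obtain ⟨k, hk⟩ := Subgroup.mem_zpowers_iff.mp g.2
      show (g : Equiv.Perm T) • t = t
      rw [← hk]
      exact (Function.IsFixedPt.perm_zpow h k)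
  rwa [hcongr] at hmod

end GenericCounting

lemma normal_subgroupOf_of_relindex_prime {p : ℕ} (hp : p.Prime) {S : Type*} [Group S]
    [Finite S] (hS : IsPGroup p S) {P Q : Subgroup S} (hidx : P.relIndex Q = p) :
    (P.subgroupOf Q).Normal := by
  haveI : Fact p.Prime := ⟨hp⟩
  haveI : Group.IsNilpotent Q := (hS.to_subgroup Q).isNilpotent
  have hnc := normalizerCondition_of_isNilpotent (G := Q)
  set P' := P.subgroupOf Q with hP'
  have hP'index : P'.index = p := hidx
  have hlt : P' < ⊤ := by
    rcases lt_or_eq_of_le (le_top (a := P')) with h | h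
    · exact h
    · exfalso
      rw [h, Subgroup.index_top] at hP'index
      exact hp.one_lt.ne' hP'index.symm
  have h2 := hnc P' hlt
  rw [← Subgroup.normalizer_eq_top_iff]
  have hmul := Subgroup.relIndex_mul_index h2.le
  rw [hP'index] at hmul
  have hdvd : (Subgroup.normalizer (P' : Set Q)).index ∣ p := Dvd.intro_left _ hmul
  rcases (Nat.Prime.eq_one_or_self_of_dvd hp _ hdvd) with h | h
  · exact Subgroup.index_eq_one.mp h
  · exfalso
    rw [h, Nat.mul_eq_right hp.pos.ne'] at hmul
    exact h2.ne (le_antisymm h2.le (Subgroup.relIndex_eq_one.mp hmul))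

lemma nat_card_sigma {ι : Type*} [Fintype ι] (f : ι → Type*) [∀ i, Finite (f i)] :
    Nat.card (Σ i, f i) = ∑ i, Nat.card (f i) := by
  letI : ∀ i, Fintype (f i) := fun i => Fintype.ofFinite _
  simp [Nat.card_eq_fintype_card, Fintype.card_sigma]
namespace BisetAction

variable {S X : Type*} [Group S]

lemma LeftFree.smul_cancel {A : BisetAction S S X} (hL : A.LeftFree) {a b : S} {x : X}
    (h : A.smul a x = A.smul b x) : a = b := by
  have h2 : A.smul (b⁻¹ * a) x = x := by
    rw [A.mul_smul, h, A.smul_smul, inv_mul_cancel, A.one_smul]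
  exact (inv_mul_eq_one.mp (hL _ _ h2)).symm

lemma mem_centralizer_range_iff {P : Subgroup S} (φ : P →* S) (z : S) :
    z ∈ Subgroup.centralizer ((φ.range : Subgroup S) : Set S) ↔
      ∀ u : P, z * φ u = φ u * z := by
  rw [Subgroup.mem_centralizer_iff]
  constructor
  · intro h u
    exact (h (φ u) ⟨u, rfl⟩).symm
  · rintro h g hg
    obtain ⟨u, rfl⟩ := hg
    exact (h u).symm

lemma smul_rmul_mem_fix (A : BisetAction S S X) {P P' : Subgroup S} {φ : P →* S}
    {φ' : P' →* S} {x : X} (hx : x ∈ A.Fix P φ) (s a : S)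
    (h : ∀ u : P', ∃ v : P, a * ↑u = ↑v * a ∧ s * φ v = φ' u * s) :
    A.smul s (A.rmul x a) ∈ A.Fix P' φ' := by
  intro u
  obtain ⟨v, hva, hsv⟩ := h u
  rw [A.smul_rmul, A.rmul_rmul, hva, ← A.rmul_rmul, hx v, A.smul_rmul, A.smul_smul, hsv,
    ← A.smul_smul]

lemma smul_mem_fix (A : BisetAction S S X) {P P' : Subgroup S} {φ : P →* S}
    {φ' : P' →* S} {x : X} (hx : x ∈ A.Fix P φ) (s : S)
    (h : ∀ u : P', ∃ v : P, (↑u : S) = ↑v ∧ s * φ v = φ' u * s) :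
    A.smul s x ∈ A.Fix P' φ' := by
  have h2 := A.smul_rmul_mem_fix hx s 1 (fun u => by
    obtain ⟨v, h1, h2⟩ := h u
    exact ⟨v, by rw [one_mul, mul_one, h1], h2⟩)
  rwa [A.rmul_one] at h2

variable (A : BisetAction S S X) {P : Subgroup S} (φ : P →* S)

/-- The centralizer of the image of `φ`. -/
abbrev Cent : Subgroup S := Subgroup.centralizer ((φ.range : Subgroup S) : Set S)

lemma cact_mem (z : Cent φ) (x : X) (hx : x ∈ A.Fix P φ) : A.smul ↑z x ∈ A.Fix P φ := by
  apply A.smul_mem_fix hx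
  intro u
  exact ⟨u, rfl, (mem_centralizer_range_iff φ ↑z).mp z.2 u⟩

/-- The action of the centralizer on the fixed-point set. -/
def cact : Cent φ → (A.Fix P φ) → (A.Fix P φ) :=
  fun z x => ⟨A.smul ↑z ↑x, A.cact_mem φ z ↑x x.2⟩

lemma cact_one : ∀ x, A.cact φ 1 x = x :=
  fun x => Subtype.ext (A.one_smul ↑x)

lemma cact_mul : ∀ a b x, A.cact φ (a * b) x = A.cact φ a (A.cact φ b x) :=
  fun a b x => Subtype.ext (A.mul_smul ↑a ↑b ↑x)

lemma cact_free (hL : A.LeftFree) : ∀ z x, A.cact φ z x = x → z = 1 := by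
  intro z x h
  exact Subtype.ext (hL _ _ (congrArg Subtype.val h))

/-- The set of `C_S(φ(P))`-orbits on the fixed-point set. -/
abbrev fixQuot : Type _ := Quotient (actSetoid (A.cact φ) (A.cact_one φ) (A.cact_mul φ))

lemma fix_card [Finite S] [Finite X] (hL : A.LeftFree) :
    Nat.card (A.Fix P φ) = Nat.card (Cent φ) * Nat.card (A.fixQuot φ) :=
  card_eq_card_mul_card_quot _ _ _ (A.cact_free φ hL)

end BisetAction
/-- Let `S` be a finite `p`-group, `X` a finite bifree `(S,S)`-biset,
`P < Q ≤ S` with `P` of index `p` in `Q`, and `φ : P → S` an injective homomorphism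
which extends to a group homomorphism `Q → S`.  Then
`|X^{(P,φ)}|/|C_S(φ(P))| ≡ ∑_{[ψ]} |X^{(Q,ψ)}|/|C_S(ψ(Q))| (mod p)`, the sum being over
representatives of the `S`-conjugacy classes of injective homomorphisms `ψ : Q → S`
whose restriction to `P` is `S`-conjugate to `φ` (all displayed quotients are exact). -/
theorem fixedPoint_extension_congruence
    (p : ℕ) (hp : p.Prime) (S : Type*) [Group S] [Finite S] (hS : IsPGroup p S)
    (X : Type*) [Finite X] (A : BisetAction S S X) (hA : A.Bifree)
    (P Q : Subgroup S) (hPQ : P < Q) (hidx : P.relIndex Q = p)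
    (φ : P →* S) (hφ : Function.Injective φ)
    (hext : ∃ φ' : Q →* S, ∀ (u : S) (hu : u ∈ P), φ' ⟨u, hPQ.le hu⟩ = φ ⟨u, hu⟩)
    (R : Finset (Q →* S))
    (hRinj : ∀ ψ ∈ R, Function.Injective ψ)
    (hRres : ∀ ψ ∈ R, RestrictionSConj hPQ.le ψ φ)
    (hRcover : ∀ ψ : Q →* S, Function.Injective ψ → RestrictionSConj hPQ.le ψ φ →
      ∃ ψ' ∈ R, HomSConj ψ ψ')
    (hRunique : ∀ ψ ∈ R, ∀ ψ' ∈ R, HomSConj ψ ψ' → ψ = ψ') :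
    Nat.card (Subgroup.centralizer ((φ.range : Subgroup S) : Set S)) ∣
        Nat.card (A.Fix P φ) ∧
    (∀ ψ ∈ R, Nat.card (Subgroup.centralizer ((ψ.range : Subgroup S) : Set S)) ∣
        Nat.card (A.Fix Q ψ)) ∧
    Nat.card (A.Fix P φ) /
        Nat.card (Subgroup.centralizer ((φ.range : Subgroup S) : Set S)) ≡
      (∑ ψ ∈ R, Nat.card (A.Fix Q ψ) /
        Nat.card (Subgroup.centralizer ((ψ.range : Subgroup S) : Set S))) [MOD p] := by
  classical
  obtain ⟨hL, hRf⟩ := hA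
  refine ⟨⟨_, A.fix_card φ hL⟩, fun ψ _ => ⟨_, A.fix_card ψ hL⟩, ?_⟩
  obtain ⟨φ', hφ'⟩ := hext
  obtain ⟨g, hgQ, hgP⟩ := SetLike.exists_of_lt hPQ
  have hgiQ : g⁻¹ ∈ Q := inv_mem hgQ
  haveI hN : (P.subgroupOf Q).Normal := normal_subgroupOf_of_relindex_prime hp hS hidx
  have hnorm : ∀ a ∈ Q, ∀ u ∈ P, a * u * a⁻¹ ∈ P := by
    intro a ha u hu
    have h1 : (⟨u, hPQ.le hu⟩ : Q) ∈ P.subgroupOf Q := Subgroup.mem_subgroupOf.mpr hu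
    have h2 := hN.conj_mem _ h1 ⟨a, ha⟩
    rw [Subgroup.mem_subgroupOf] at h2
    simpa using h2
  have hnormi : ∀ u : S, u ∈ P → g⁻¹ * u * g ∈ P := by
    intro u hu
    have h2 := hnorm g⁻¹ hgiQ u hu
    rwa [inv_inv] at h2
  have hgp : g ^ p ∈ P := by
    have h1 := (P.subgroupOf Q).pow_index_mem (⟨g, hgQ⟩ : Q)
    rw [show (P.subgroupOf Q).index = p from hidx, Subgroup.mem_subgroupOf] at h1
    simpa using h1
  set t : S := φ' ⟨g, hgQ⟩ with ht
  have hφ'' : ∀ u : P, φ' ⟨↑u, hPQ.le u.2⟩ = φ u := fun u => hφ' ↑u u.2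
  have hconjP : ∀ (u : P) (hv : g * ↑u * g⁻¹ ∈ P),
      t * φ u * t⁻¹ = φ ⟨g * ↑u * g⁻¹, hv⟩ := by
    intro u hv
    have e1 : (⟨g * ↑u * g⁻¹, hPQ.le hv⟩ : Q)
        = ⟨g, hgQ⟩ * ⟨↑u, hPQ.le u.2⟩ * (⟨g, hgQ⟩)⁻¹ := Subtype.ext rfl
    rw [← hφ' _ hv, e1, map_mul, map_mul, map_inv, hφ'' u, ← ht]
  have hconjPinv : ∀ (u : P) (hv : g⁻¹ * ↑u * g ∈ P),
      t⁻¹ * φ u * t = φ ⟨g⁻¹ * ↑u * g, hv⟩ := by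
    intro u hv
    have e1 : (⟨g⁻¹ * ↑u * g, hPQ.le hv⟩ : Q)
        = (⟨g, hgQ⟩)⁻¹ * ⟨↑u, hPQ.le u.2⟩ * ⟨g, hgQ⟩ := Subtype.ext rfl
    rw [← hφ' _ hv, e1, map_mul, map_mul, map_inv, hφ'' u, ← ht]
  have htp : t ^ p = φ ⟨g ^ p, hgp⟩ := by
    have e1 : (⟨g, hgQ⟩ : Q) ^ p = ⟨g ^ p, hPQ.le hgp⟩ := Subtype.ext (by simp)
    rw [ht, ← map_pow, e1, hφ' _ hgp]
  -- the permutation σ of the fixed-point set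
  let σf : ↥(A.Fix P φ) → ↥(A.Fix P φ) := fun x =>
    ⟨A.smul t⁻¹ (A.rmul ↑x g), A.smul_rmul_mem_fix x.2 t⁻¹ g (fun u =>
      ⟨⟨g * ↑u * g⁻¹, hnorm g hgQ ↑u u.2⟩, by group,
        by rw [← hconjP u (hnorm g hgQ ↑u u.2)]; group⟩)⟩
  let σb : ↥(A.Fix P φ) → ↥(A.Fix P φ) := fun x =>
    ⟨A.smul t (A.rmul ↑x g⁻¹), A.smul_rmul_mem_fix x.2 t g⁻¹ (fun u =>
      ⟨⟨g⁻¹ * ↑u * g, hnormi ↑u u.2⟩, by group,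
        by rw [← hconjPinv u (hnormi ↑u u.2)]; group⟩)⟩
  have hσbf : ∀ x, σb (σf x) = x := by
    intro x
    apply Subtype.ext
    show A.smul t (A.rmul (A.smul t⁻¹ (A.rmul ↑x g)) g⁻¹) = ↑x
    rw [A.smul_rmul, A.smul_smul, A.rmul_rmul, mul_inv_cancel, mul_inv_cancel, A.rmul_one,
      A.one_smul]
  have hσfb : ∀ x, σf (σb x) = x := by
    intro x
    apply Subtype.ext
    show A.smul t⁻¹ (A.rmul (A.smul t (A.rmul ↑x g⁻¹)) g) = ↑x
    rw [A.smul_rmul, A.smul_smul, A.rmul_rmul, inv_mul_cancel, inv_mul_cancel, A.rmul_one,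
      A.one_smul]
  -- conjugation stability of the centralizer
  have hmemconj : ∀ z ∈ BisetAction.Cent φ, t⁻¹ * z * t ∈ BisetAction.Cent φ := by
    intro z hz
    rw [BisetAction.mem_centralizer_range_iff]
    intro u
    have h1 := (BisetAction.mem_centralizer_range_iff φ z).mp hz
      ⟨g * ↑u * g⁻¹, hnorm g hgQ ↑u u.2⟩
    rw [← hconjP u (hnorm g hgQ ↑u u.2)] at h1
    calc t⁻¹ * z * t * φ u
        = t⁻¹ * (z * (t * φ u * t⁻¹)) * t := by group
      _ = t⁻¹ * ((t * φ u * t⁻¹) * z) * t := by rw [h1]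
      _ = φ u * (t⁻¹ * z * t) := by group
  have hmemconj' : ∀ z ∈ BisetAction.Cent φ, t * z * t⁻¹ ∈ BisetAction.Cent φ := by
    intro z hz
    rw [BisetAction.mem_centralizer_range_iff]
    intro u
    have h1 := (BisetAction.mem_centralizer_range_iff φ z).mp hz
      ⟨g⁻¹ * ↑u * g, hnormi ↑u u.2⟩
    rw [← hconjPinv u (hnormi ↑u u.2)] at h1
    calc t * z * t⁻¹ * φ u
        = t * (z * (t⁻¹ * φ u * t)) * t⁻¹ := by group
      _ = t * ((t⁻¹ * φ u * t) * z) * t⁻¹ := by rw [h1]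
      _ = φ u * (t * z * t⁻¹) := by group
  have hstepf : ∀ (z : BisetAction.Cent φ) (x : ↥(A.Fix P φ)),
      σf (A.cact φ z x) = A.cact φ ⟨t⁻¹ * ↑z * t, hmemconj ↑z z.2⟩ (σf x) := by
    intro z x
    apply Subtype.ext
    show A.smul t⁻¹ (A.rmul (A.smul ↑z ↑x) g)
      = A.smul (t⁻¹ * ↑z * t) (A.smul t⁻¹ (A.rmul ↑x g))
    rw [A.smul_rmul, A.smul_smul, A.smul_smul]
    exact congrArg (fun w => A.smul w (A.rmul (↑x) g)) (by group)
  have hstepb : ∀ (z : BisetAction.Cent φ) (x : ↥(A.Fix P φ)),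
      σb (A.cact φ z x) = A.cact φ ⟨t * ↑z * t⁻¹, hmemconj' ↑z z.2⟩ (σb x) := by
    intro z x
    apply Subtype.ext
    show A.smul t (A.rmul (A.smul ↑z ↑x) g⁻¹)
      = A.smul (t * ↑z * t⁻¹) (A.smul t (A.rmul ↑x g⁻¹))
    rw [A.smul_rmul, A.smul_smul, A.smul_smul]
    exact congrArg (fun w => A.smul w (A.rmul (↑x) g⁻¹)) (by group)
  let σT : Equiv.Perm (A.fixQuot φ) :=
    { toFun := Quotient.map σf (by
        intro x y h
        have h' : ∃ z : BisetAction.Cent φ, y = A.cact φ z x := h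
        obtain ⟨z, rfl⟩ := h'
        exact ⟨⟨t⁻¹ * ↑z * t, hmemconj ↑z z.2⟩, hstepf z x⟩)
      invFun := Quotient.map σb (by
        intro x y h
        have h' : ∃ z : BisetAction.Cent φ, y = A.cact φ z x := h
        obtain ⟨z, rfl⟩ := h'
        exact ⟨⟨t * ↑z * t⁻¹, hmemconj' ↑z z.2⟩, hstepb z x⟩)
      left_inv := by
        intro q
        refine Quotient.inductionOn q (fun x => ?_)
        show Quotient.map σb _ (Quotient.map σf _ (Quotient.mk _ x)) = Quotient.mk _ x
        rw [Quotient.map_mk, Quotient.map_mk, hσbf x]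
      right_inv := by
        intro q
        refine Quotient.inductionOn q (fun x => ?_)
        show Quotient.map σf _ (Quotient.map σb _ (Quotient.mk _ x)) = Quotient.mk _ x
        rw [Quotient.map_mk, Quotient.map_mk, hσfb x] }
  have hσT1 : ∀ x : ↥(A.Fix P φ), σT (Quotient.mk _ x) = Quotient.mk _ (σf x) :=
    fun x => rfl
  have hiter : ∀ (n : ℕ) (x : ↥(A.Fix P φ)),
      ((σf^[n]) x : X) = A.smul (t ^ n)⁻¹ (A.rmul ↑x (g ^ n)) := by
    intro n
    induction n with
    | zero => intro x; simp [A.rmul_one, A.one_smul]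
    | succ n ih =>
      intro x
      rw [Function.iterate_succ_apply']
      show A.smul t⁻¹ (A.rmul ((σf^[n]) x : X) g) = _
      rw [ih x, A.smul_rmul, A.smul_smul, A.rmul_rmul, pow_succ, pow_succ, mul_inv_rev]
  have hσfp : ∀ x, (σf^[p]) x = x := by
    intro x
    apply Subtype.ext
    rw [hiter p x, show A.rmul (↑x) (g ^ p) = A.smul (φ ⟨g ^ p, hgp⟩) ↑x from x.2 ⟨g ^ p, hgp⟩,
      A.smul_smul, ← htp, inv_mul_cancel, A.one_smul]
  have hσTp : σT ^ p = 1 := by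
    have hpow : ∀ (n : ℕ) (x : ↥(A.Fix P φ)),
        (σT ^ n) (Quotient.mk _ x) = Quotient.mk _ ((σf^[n]) x) := by
      intro n
      induction n with
      | zero => intro x; rfl
      | succ n ih =>
        intro x
        rw [pow_succ, Equiv.Perm.mul_apply, hσT1 x, ih (σf x), ← Function.iterate_succ_apply]
    apply Equiv.ext
    intro q
    refine Quotient.inductionOn q (fun x => ?_)
    rw [show ((1 : Equiv.Perm (A.fixQuot φ)) (Quotient.mk _ x)) = Quotient.mk _ x from rfl,
      hpow p x, hσfp x]
  have hTmod := card_modEq_card_fixed_of_pow_eq_one hp σT hσTp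
  -- the maps from the ψ-fixed points
  have hRc : ∀ ψ : {ψ : Q →* S // ψ ∈ R}, RestrictionSConj hPQ.le ψ.1 φ :=
    fun ψ => hRres ψ.1 ψ.2
  choose sψ hsψ using hRc
  have hsψ' : ∀ (ψ : {ψ : Q →* S // ψ ∈ R}) (u : P),
      ψ.1 ⟨↑u, hPQ.le u.2⟩ = sψ ψ * φ u * (sψ ψ)⁻¹ := fun ψ u => hsψ ψ ↑u u.2
  have hκmem : ∀ (ψ : {ψ : Q →* S // ψ ∈ R}) (x : X), x ∈ A.Fix Q ψ.1 →
      A.smul (sψ ψ)⁻¹ x ∈ A.Fix P φ := by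
    intro ψ x hx
    apply A.smul_mem_fix hx
    intro u
    refine ⟨⟨↑u, hPQ.le u.2⟩, rfl, ?_⟩
    rw [hsψ' ψ u]
    group
  let κ : ∀ ψ : {ψ : Q →* S // ψ ∈ R}, ↥(A.Fix Q ψ.1) → ↥(A.Fix P φ) :=
    fun ψ x => ⟨A.smul (sψ ψ)⁻¹ ↑x, hκmem ψ ↑x x.2⟩
  have hκcompat : ∀ (ψ : {ψ : Q →* S // ψ ∈ R}) (x y : ↥(A.Fix Q ψ.1)),
      (∃ z : BisetAction.Cent ψ.1, y = A.cact ψ.1 z x) →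
      ∃ z' : BisetAction.Cent φ, κ ψ y = A.cact φ z' (κ ψ x) := by
    intro ψ x y hz
    obtain ⟨z, rfl⟩ := hz
    have hzmem : (sψ ψ)⁻¹ * ↑z * (sψ ψ) ∈ BisetAction.Cent φ := by
      rw [BisetAction.mem_centralizer_range_iff]
      intro u
      have h1 := (BisetAction.mem_centralizer_range_iff ψ.1 ↑z).mp z.2 ⟨↑u, hPQ.le u.2⟩
      rw [hsψ' ψ u] at h1
      calc (sψ ψ)⁻¹ * ↑z * (sψ ψ) * φ u
          = (sψ ψ)⁻¹ * (↑z * (sψ ψ * φ u * (sψ ψ)⁻¹)) * (sψ ψ) := by group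
        _ = (sψ ψ)⁻¹ * ((sψ ψ * φ u * (sψ ψ)⁻¹) * ↑z) * (sψ ψ) := by rw [h1]
        _ = φ u * ((sψ ψ)⁻¹ * ↑z * (sψ ψ)) := by group
    refine ⟨⟨(sψ ψ)⁻¹ * ↑z * (sψ ψ), hzmem⟩, ?_⟩
    apply Subtype.ext
    show A.smul (sψ ψ)⁻¹ (A.smul ↑z ↑x)
      = A.smul ((sψ ψ)⁻¹ * ↑z * sψ ψ) (A.smul (sψ ψ)⁻¹ ↑x)
    rw [A.smul_smul, A.smul_smul]
    exact congrArg (fun w => A.smul w (↑x)) (by group)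
  let Fm : (Σ ψ : {ψ : Q →* S // ψ ∈ R}, A.fixQuot ψ.1) → A.fixQuot φ :=
    fun a => Quotient.map (κ a.1) (fun x y h => hκcompat a.1 x y h) a.2
  let gQ : Q := ⟨g, hgQ⟩
  have hFfix : ∀ a, σT (Fm a) = Fm a := by
    rintro ⟨ψ, q⟩
    refine Quotient.inductionOn q (fun x => ?_)
    show σT (Quotient.mk _ (κ ψ x)) = Quotient.mk _ (κ ψ x)
    rw [hσT1]
    have hv : g * (1 : S) * g⁻¹ ∈ P := by simpa using (hnorm g hgQ 1 P.one_mem)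
    have hzmem : t⁻¹ * (sψ ψ)⁻¹ * ψ.1 gQ * (sψ ψ) ∈ BisetAction.Cent φ := by
      rw [BisetAction.mem_centralizer_range_iff]
      intro u
      have hvu : g * ↑u * g⁻¹ ∈ P := hnorm g hgQ ↑u u.2
      have hkey : ψ.1 gQ * (sψ ψ * φ u * (sψ ψ)⁻¹) * (ψ.1 gQ)⁻¹
          = sψ ψ * (t * φ u * t⁻¹) * (sψ ψ)⁻¹ := by
        rw [← hsψ' ψ u, ← map_inv, ← map_mul, ← map_mul, hconjP u hvu,
          show gQ * ⟨↑u, hPQ.le u.2⟩ * gQ⁻¹ = (⟨g * ↑u * g⁻¹, hPQ.le hvu⟩ : Q) from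
            Subtype.ext rfl,
          hsψ' ψ ⟨g * ↑u * g⁻¹, hvu⟩]
      calc t⁻¹ * (sψ ψ)⁻¹ * ψ.1 gQ * (sψ ψ) * φ u
          = t⁻¹ * (sψ ψ)⁻¹ * (ψ.1 gQ * (sψ ψ * φ u * (sψ ψ)⁻¹) * (ψ.1 gQ)⁻¹)
              * ψ.1 gQ * (sψ ψ) := by group
        _ = t⁻¹ * (sψ ψ)⁻¹ * (sψ ψ * (t * φ u * t⁻¹) * (sψ ψ)⁻¹)
              * ψ.1 gQ * (sψ ψ) := by rw [hkey]
        _ = φ u * (t⁻¹ * (sψ ψ)⁻¹ * ψ.1 gQ * (sψ ψ)) := by group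
    have hrel : ∃ z' : BisetAction.Cent φ, σf (κ ψ x) = A.cact φ z' (κ ψ x) := by
      refine ⟨⟨t⁻¹ * (sψ ψ)⁻¹ * ψ.1 gQ * (sψ ψ), hzmem⟩, ?_⟩
      apply Subtype.ext
      show A.smul t⁻¹ (A.rmul (A.smul (sψ ψ)⁻¹ ↑x) g)
        = A.smul (t⁻¹ * (sψ ψ)⁻¹ * ψ.1 gQ * (sψ ψ)) (A.smul (sψ ψ)⁻¹ ↑x)
      rw [A.smul_rmul, show A.rmul (↑x : X) g = A.smul (ψ.1 gQ) ↑x from x.2 gQ,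
        A.smul_smul, A.smul_smul, A.smul_smul]
      exact congrArg (fun w => A.smul w (↑x)) (by group)
    exact (Quotient.sound hrel).symm
  let F : (Σ ψ : {ψ : Q →* S // ψ ∈ R}, A.fixQuot ψ.1) → {q : A.fixQuot φ // σT q = q} :=
    fun a => ⟨Fm a, hFfix a⟩
  -- a homomorphism-conjugation principle
  have hhomconj : ∀ (ψ₁ ψ₂ : Q →* S) (x₁ x₂ : X) (w : S), x₁ ∈ A.Fix Q ψ₁ →
      x₂ ∈ A.Fix Q ψ₂ → x₂ = A.smul w x₁ → ∀ u : Q, ψ₂ u = w * ψ₁ u * w⁻¹ := by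
    intro ψ₁ ψ₂ x₁ x₂ w h1 h2 hx u
    have e1 : A.smul (ψ₂ u) x₂ = A.smul (w * ψ₁ u) x₁ := by
      rw [← h2 u, hx, A.smul_rmul, h1 u, A.smul_smul]
    have e2 : A.smul (w * ψ₁ u * w⁻¹) x₂ = A.smul (w * ψ₁ u) x₁ := by
      rw [hx, A.smul_smul, show w * ψ₁ u * w⁻¹ * w = w * ψ₁ u by group]
    exact hL.smul_cancel (e1.trans e2.symm)
  have hFbij : Function.Bijective F := by
    constructor
    · rintro ⟨ψ₁, q₁⟩ ⟨ψ₂, q₂⟩ hF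
      obtain ⟨x₁, rfl⟩ := Quotient.exists_rep q₁
      obtain ⟨x₂, rfl⟩ := Quotient.exists_rep q₂
      have h0 : (Quotient.mk _ (κ ψ₁ x₁) : A.fixQuot φ) = Quotient.mk _ (κ ψ₂ x₂) :=
        congrArg Subtype.val hF
      have h0' : ∃ z : BisetAction.Cent φ, κ ψ₂ x₂ = A.cact φ z (κ ψ₁ x₁) :=
        Quotient.exact h0
      obtain ⟨z, hz⟩ := h0'
      have hval : A.smul (sψ ψ₂)⁻¹ ↑x₂ = A.smul (↑z * (sψ ψ₁)⁻¹) ↑x₁ := by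
        have h3 := congrArg Subtype.val hz
        rw [show ((A.cact φ z (κ ψ₁ x₁) : ↥(A.Fix P φ)) : X)
            = A.smul ↑z (A.smul (sψ ψ₁)⁻¹ ↑x₁) from rfl, A.smul_smul] at h3
        exact h3
      have hx2 : (↑x₂ : X) = A.smul (sψ ψ₂ * ↑z * (sψ ψ₁)⁻¹) ↑x₁ := by
        have h4 := congrArg (A.smul (sψ ψ₂)) hval
        rw [A.smul_smul, A.smul_smul, mul_inv_cancel, A.one_smul] at h4
        rw [h4]
        exact congrArg (fun w => A.smul w (↑x₁)) (by group)
      have hcon := hhomconj ψ₁.1 ψ₂.1 ↑x₁ ↑x₂ _ x₁.2 x₂.2 hx2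
      have hψeq : ψ₁ = ψ₂ :=
        Subtype.ext (hRunique ψ₁.1 ψ₁.2 ψ₂.1 ψ₂.2 ⟨_, hcon⟩)
      subst hψeq
      have hwmem : sψ ψ₁ * ↑z * (sψ ψ₁)⁻¹ ∈ BisetAction.Cent ψ₁.1 := by
        rw [BisetAction.mem_centralizer_range_iff]
        intro u
        have h5 := hcon u
        calc sψ ψ₁ * ↑z * (sψ ψ₁)⁻¹ * ψ₁.1 u
            = (sψ ψ₁ * ↑z * (sψ ψ₁)⁻¹ * ψ₁.1 u * (sψ ψ₁ * ↑z * (sψ ψ₁)⁻¹)⁻¹)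
                * (sψ ψ₁ * ↑z * (sψ ψ₁)⁻¹) := by group
          _ = ψ₁.1 u * (sψ ψ₁ * ↑z * (sψ ψ₁)⁻¹) := by rw [← h5]
      refine congrArg (Sigma.mk ψ₁) ?_
      have hxrel : (x₂ : ↥(A.Fix Q ψ₁.1))
          = A.cact ψ₁.1 ⟨sψ ψ₁ * ↑z * (sψ ψ₁)⁻¹, hwmem⟩ x₁ := Subtype.ext hx2
      exact Quotient.sound ⟨_, hxrel⟩
    · rintro ⟨q, hq⟩
      obtain ⟨x, rfl⟩ := Quotient.exists_rep q
      have h0 : (Quotient.mk _ (σf x) : A.fixQuot φ) = Quotient.mk _ x := hq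
      have h0' : ∃ z : BisetAction.Cent φ, (x : ↥(A.Fix P φ)) = A.cact φ z (σf x) :=
        Quotient.exact h0
      obtain ⟨z, hz⟩ := h0'
      have hxg : A.rmul ↑x g = A.smul (t * (↑z)⁻¹) ↑x := by
        have h1 := congrArg Subtype.val hz
        rw [show ((A.cact φ z (σf x) : ↥(A.Fix P φ)) : X)
            = A.smul ↑z (A.smul t⁻¹ (A.rmul ↑x g)) from rfl, A.smul_smul] at h1
        have h2 := congrArg (A.smul (↑z * t⁻¹)⁻¹) h1
        rw [A.smul_smul, inv_mul_cancel, A.one_smul] at h2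
        rw [← h2]
        exact congrArg (fun w => A.smul w (↑x)) (by group)
      -- the subgroup of elements of Q acting on x through the left S-action
      let Hgp : Subgroup Q :=
        { carrier := {q : Q | ∃ w : S, A.rmul ↑x ↑q = A.smul w ↑x}
          one_mem' := ⟨1, by
            rw [OneMemClass.coe_one, A.rmul_one, A.one_smul]⟩
          mul_mem' := by
            rintro a b ⟨wa, ha⟩ ⟨wb, hb⟩
            refine ⟨wa * wb, ?_⟩
            show A.rmul ↑x (↑a * ↑b) = _
            rw [A.rmul_mul, ha, A.smul_rmul, hb, A.smul_smul]
          inv_mem' := by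
            rintro a ⟨w, hw⟩
            refine ⟨w⁻¹, ?_⟩
            have h1 : A.smul w⁻¹ (A.rmul ↑x ↑a) = ↑x := by
              rw [hw, A.smul_smul, inv_mul_cancel, A.one_smul]
            have h2 := congrArg (fun y => A.rmul y ((↑a : S)⁻¹)) h1
            rw [A.smul_rmul, A.rmul_rmul, mul_inv_cancel, A.rmul_one] at h2
            show A.rmul ↑x ((↑a : S)⁻¹) = A.smul w⁻¹ ↑x
            exact h2.symm }
      have hgH : gQ ∈ Hgp := ⟨t * (↑z)⁻¹, hxg⟩
      have hHtop : Hgp = ⊤ := by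
        by_contra hne
        have hPsub : P.subgroupOf Q ≤ Hgp := by
          intro q hq'
          exact ⟨φ ⟨↑q, Subgroup.mem_subgroupOf.mp hq'⟩,
            x.2 ⟨↑q, Subgroup.mem_subgroupOf.mp hq'⟩⟩
        have hmul := Subgroup.relIndex_mul_index hPsub
        rw [show (P.subgroupOf Q).index = p from hidx] at hmul
        rcases hp.eq_one_or_self_of_dvd Hgp.index (Dvd.intro_left _ hmul) with h | h
        · exact hne (Subgroup.index_eq_one.mp h)
        · rw [h, Nat.mul_eq_right hp.pos.ne'] at hmul
          exact hgP (Subgroup.mem_subgroupOf.mp (Subgroup.relIndex_eq_one.mp hmul hgH))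
      have hall : ∀ q : Q, ∃ w : S, A.rmul ↑x ↑q = A.smul w ↑x := by
        intro q
        have hq'' : q ∈ Hgp := hHtop ▸ Subgroup.mem_top q
        exact hq''
      choose w hw using hall
      have hmap_one : w 1 = 1 := by
        refine hL.smul_cancel (x := (↑x : X)) ?_
        rw [← hw 1, OneMemClass.coe_one, A.rmul_one, A.one_smul]
      have hmap_mul : ∀ a b : Q, w (a * b) = w a * w b := by
        intro a b
        refine hL.smul_cancel (x := (↑x : X)) ?_
        rw [← hw (a * b)]
        show A.rmul ↑x (↑a * ↑b) = _
        rw [A.rmul_mul, hw a, A.smul_rmul, hw b, A.smul_smul]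
      let ψ₀ : Q →* S := { toFun := w, map_one' := hmap_one, map_mul' := hmap_mul }
      have hxfix : (↑x : X) ∈ A.Fix Q ψ₀ := fun u => hw u
      have hψ₀inj : Function.Injective ψ₀ := by
        rw [injective_iff_map_eq_one]
        intro a ha
        have h1 : A.rmul ↑x ↑a = ↑x := by
          rw [hw a, show w a = ψ₀ a from rfl, ha, A.one_smul]
        exact Subtype.ext (hRf ↑a ↑x h1)
      have hres : RestrictionSConj hPQ.le ψ₀ φ := by
        refine ⟨1, fun u hu => ?_⟩
        rw [one_mul, inv_one, mul_one]
        refine hL.smul_cancel (x := (↑x : X)) ?_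
        exact ((hw ⟨u, hPQ.le hu⟩).symm.trans (x.2 ⟨u, hu⟩))
      obtain ⟨ψ', hψ'R, hhc⟩ := hRcover ψ₀ hψ₀inj hres
      obtain ⟨c, hc⟩ := hhc
      have hymem : A.smul c ↑x ∈ A.Fix Q ψ' := by
        apply A.smul_mem_fix hxfix
        intro u
        refine ⟨u, rfl, ?_⟩
        rw [hc u]
        group
      have hψ₀res : ∀ u : P, ψ₀ ⟨↑u, hPQ.le u.2⟩ = φ u := by
        intro u
        refine hL.smul_cancel (x := (↑x : X)) ?_
        exact ((hw ⟨↑u, hPQ.le u.2⟩).symm.trans (x.2 u))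
      have hz'mem : (sψ ⟨ψ', hψ'R⟩)⁻¹ * c ∈ BisetAction.Cent φ := by
        rw [BisetAction.mem_centralizer_range_iff]
        intro u
        have h6 := hc ⟨↑u, hPQ.le u.2⟩
        rw [hψ₀res u] at h6
        have h7 := hsψ' ⟨ψ', hψ'R⟩ u
        calc (sψ ⟨ψ', hψ'R⟩)⁻¹ * c * φ u
            = (sψ ⟨ψ', hψ'R⟩)⁻¹ * (c * φ u * c⁻¹) * c := by group
          _ = (sψ ⟨ψ', hψ'R⟩)⁻¹ * ψ' ⟨↑u, hPQ.le u.2⟩ * c := by rw [h6]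
          _ = (sψ ⟨ψ', hψ'R⟩)⁻¹ * (sψ ⟨ψ', hψ'R⟩ * φ u * (sψ ⟨ψ', hψ'R⟩)⁻¹) * c := by
              rw [h7]
          _ = φ u * ((sψ ⟨ψ', hψ'R⟩)⁻¹ * c) := by group
      refine ⟨⟨⟨ψ', hψ'R⟩, Quotient.mk _ ⟨A.smul c ↑x, hymem⟩⟩, ?_⟩
      apply Subtype.ext
      show (Quotient.mk _ (κ ⟨ψ', hψ'R⟩ ⟨A.smul c ↑x, hymem⟩) : A.fixQuot φ)
        = Quotient.mk _ x
      refine (Quotient.sound ?_).symm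
      refine ⟨⟨(sψ ⟨ψ', hψ'R⟩)⁻¹ * c, hz'mem⟩, ?_⟩
      apply Subtype.ext
      show A.smul (sψ ⟨ψ', hψ'R⟩)⁻¹ (A.smul c ↑x) = A.smul ((sψ ⟨ψ', hψ'R⟩)⁻¹ * c) ↑x
      exact A.smul_smul _ _ _
  -- counting
  have hc1pos : 0 < Nat.card (BisetAction.Cent φ) := Nat.card_pos
  have hT : Nat.card (A.Fix P φ) / Nat.card (BisetAction.Cent φ) = Nat.card (A.fixQuot φ) := by
    rw [A.fix_card φ hL, Nat.mul_div_cancel_left _ hc1pos]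
  have hsum : Nat.card {q : A.fixQuot φ // σT q = q}
      = ∑ ψ ∈ R, Nat.card (A.Fix Q ψ) / Nat.card (BisetAction.Cent ψ) := by
    calc Nat.card {q : A.fixQuot φ // σT q = q}
        = Nat.card (Σ ψ : {ψ : Q →* S // ψ ∈ R}, A.fixQuot ψ.1) :=
          (Nat.card_congr (Equiv.ofBijective F hFbij)).symm
      _ = ∑ ψ : {ψ : Q →* S // ψ ∈ R}, Nat.card (A.fixQuot ψ.1) := nat_card_sigma _
      _ = ∑ ψ : {ψ : Q →* S // ψ ∈ R},
            Nat.card (A.Fix Q ψ.1) / Nat.card (BisetAction.Cent ψ.1) := by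
          refine Finset.sum_congr rfl (fun ψ _ => ?_)
          rw [A.fix_card ψ.1 hL, Nat.mul_div_cancel_left _ Nat.card_pos]
      _ = ∑ ψ ∈ R, Nat.card (A.Fix Q ψ) / Nat.card (BisetAction.Cent ψ) :=
          Finset.sum_coe_sort R
            (fun ψ => Nat.card (A.Fix Q ψ) / Nat.card (BisetAction.Cent ψ))
  rw [hT, ← hsum]
  exact hTmod
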